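/- Let X be a δ-hyperbolic metric space. On the isometry group of X with the topology of pointwise convergence, the stable length f ↦ d∞(f) is continuous: it is both the infimum over n ≥ 1 of the continuous functions f ↦ d(fⁿx,x)/n (upper semicontinuity) and the supremum over n ≥ 1 of the continuous functions f ↦ (d(f^{2n}x,x) − d(fⁿx,x) − 2δ)/n (lower semicontinuity), for any fixed x ∈ X. -/

import Mathlib

open Filter Topology Function

/-- The stable length `d∞(f) = inf_{n ≥ 1} d(fⁿx, x)/n`
(which equals `lim_n d(fⁿx, x)/n` by Fekete's lemma). -/
noncomputable def stableLen {X : Type*} [MetricSpace X] (f : X → X) (x : X) : ℝ :=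
  ⨅ n : ℕ, dist (f^[n + 1] x) x / (n + 1)

section Aux

variable {X : Type*} [MetricSpace X]

lemma aux_isometry_iterate {f : X → X} (hf : Isometry f) (n : ℕ) : Isometry f^[n] := by
  induction n with
  | zero => simpa using isometry_id
  | succ n ih => rw [Function.iterate_succ]; exact ih.comp hf

lemma aux_subadd {f : X → X} (hf : Isometry f) (x : X) :
    Subadditive (fun n => dist (f^[n] x) x) := by
  intro m n
  calc dist (f^[m + n] x) x ≤ dist (f^[m + n] x) (f^[m] x) + dist (f^[m] x) x :=
        dist_triangle _ _ _
    _ = dist (f^[n] x) x + dist (f^[m] x) x := by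
        rw [Function.iterate_add_apply, (aux_isometry_iterate hf m).dist_eq]
    _ = dist (f^[m] x) x + dist (f^[n] x) x := add_comm _ _

/-- Key hyperbolicity lemma: `d(g²x,x) - d(gx,x) - 2δ ≤ d(gⁿx,x)/n` for `n ≥ 1`. -/
lemma aux_key (δ : ℝ) (hδ : 0 ≤ δ)
    (hfpc : ∀ x y s t : X, dist x y + dist s t ≤
      max (dist x s + dist y t) (dist x t + dist y s) + 2 * δ)
    {g : X → X} (hg : Isometry g) (x : X) (n : ℕ) :
    dist (g^[2] x) x - dist (g^[1] x) x - 2 * δ ≤ dist (g^[n + 1] x) x / (n + 1) := by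
  set b : ℕ → ℝ := fun k => dist (g^[k] x) x with hb
  set c : ℝ := b 2 - b 1 - 2 * δ with hc
  show c ≤ b (n + 1) / (n + 1)
  rcases le_or_gt c 0 with h0 | hcpos
  · exact h0.trans (div_nonneg dist_nonneg (by positivity))
  -- the hyperbolic four-point inequality specialized
  have hB : ∀ k : ℕ, b 2 + b (k + 1) ≤ b 1 + max (b k) (b (k + 2)) + 2 * δ := by
    intro k
    have h := hfpc x (g^[2] x) (g^[1] x) (g^[k + 2] x)
    have e1 : dist (g^[1] x) (g^[k + 2] x) = b (k + 1) := by
      have : g^[k + 2] x = g^[1] (g^[k + 1] x) := by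
        rw [show k + 2 = 1 + (k + 1) from by omega, Function.iterate_add_apply]
      rw [this, (aux_isometry_iterate hg 1).dist_eq, dist_comm]
    have e2 : dist (g^[2] x) (g^[k + 2] x) = b k := by
      have : g^[k + 2] x = g^[2] (g^[k] x) := by
        rw [show k + 2 = 2 + k from by omega, Function.iterate_add_apply]
      rw [this, (aux_isometry_iterate hg 2).dist_eq, dist_comm]
    have e3 : dist (g^[2] x) (g^[1] x) = b 1 := by
      have : g^[2] x = g^[1] (g^[1] x) := by
        rw [show 2 = 1 + 1 from rfl, Function.iterate_add_apply]
      rw [this, (aux_isometry_iterate hg 1).dist_eq]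
    rw [dist_comm x (g^[2] x)] at h
    rw [e1, e2, e3] at h
    have e4 : dist x (g^[1] x) = b 1 := dist_comm _ _
    have e5 : dist x (g^[k + 2] x) = b (k + 2) := dist_comm _ _
    rw [e4, e5] at h
    refine h.trans (add_le_add_left ?_ _)
    rcases max_cases (b 1 + b k) (b (k + 2) + b 1) with ⟨hm, _⟩ | ⟨hm, _⟩ <;> rw [hm]
    · exact add_le_add_right (le_max_left _ _) _
    · rw [add_comm]; exact add_le_add_right (le_max_right _ _) _
  -- step: b (k+1) ≥ b k + c
  have hstep : ∀ k : ℕ, b k + c ≤ b (k + 1) := by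
    intro k
    induction k with
    | zero =>
      have hb0 : b 0 = 0 := by simp [hb]
      have h2 : b 2 ≤ b 1 + b 1 := aux_subadd hg x 1 1
      rw [hb0, zero_add, hc]
      linarith
    | succ k ih =>
      have h := hB k
      have hmax : b (k + 1) + c ≤ max (b k) (b (k + 2)) := by
        rw [hc]; linarith
      rcases max_cases (b k) (b (k + 2)) with ⟨hm, _⟩ | ⟨hm, _⟩ <;> rw [hm] at hmax <;> linarith
  -- hence b n ≥ n * c
  have hlin : ∀ k : ℕ, (k : ℝ) * c ≤ b k := by
    intro k
    induction k with
    | zero => simp [hb]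
    | succ k ih =>
      have := hstep k
      push_cast
      linarith
  have hpos : (0 : ℝ) < (n : ℝ) + 1 := by positivity
  rw [le_div_iff₀ hpos]
  have := hlin (n + 1)
  push_cast at this
  linarith

lemma aux_Gle (δ : ℝ) (hδ : 0 ≤ δ)
    (hfpc : ∀ x y s t : X, dist x y + dist s t ≤
      max (dist x s + dist y t) (dist x t + dist y s) + 2 * δ)
    {f : X → X} (hf : Isometry f) (x : X) (n : ℕ) :
    (dist (f^[2 * (n + 1)] x) x - dist (f^[n + 1] x) x - 2 * δ) / (n + 1) ≤ stableLen f x := by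
  have hit : ∀ j : ℕ, (f^[n + 1])^[j] x = f^[(n + 1) * j] x := fun j => by
    rw [Function.iterate_mul]
  rw [stableLen]
  apply le_ciInf
  intro k
  have hkey := aux_key δ hδ hfpc (aux_isometry_iterate hf (n + 1)) x k
  rw [hit 2, hit 1, hit (k + 1), show (n + 1) * 2 = 2 * (n + 1) from by ring,
    Nat.mul_one] at hkey
  have hsub : dist (f^[(n + 1) * (k + 1)] x) x ≤ ((n : ℝ) + 1) * dist (f^[k + 1] x) x := by
    have h := (aux_subadd hf x).apply_mul_add_le (n + 1) (k + 1) 0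
    simp only [add_zero, Function.iterate_zero_apply, dist_self] at h
    push_cast at h
    linarith
  have hk1 : (0 : ℝ) < (k : ℝ) + 1 := by positivity
  have hn1 : (0 : ℝ) < (n : ℝ) + 1 := by positivity
  have h1 : (dist (f^[2 * (n + 1)] x) x - dist (f^[n + 1] x) x - 2 * δ) * ((k : ℝ) + 1)
      ≤ dist (f^[(n + 1) * (k + 1)] x) x := (le_div_iff₀ hk1).mp hkey
  rw [div_le_div_iff₀ hn1 hk1]
  nlinarith [dist_nonneg (x := f^[k + 1] x) (y := x)]

lemma aux_tendsto {f : X → X} (hf : Isometry f) (x : X) :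
    Tendsto (fun n : ℕ => dist (f^[n] x) x / n) atTop (𝓝 (stableLen f x)) := by
  have hsub := aux_subadd hf x
  have hbdd : BddBelow (Set.range fun n : ℕ => dist (f^[n] x) x / n) := by
    refine ⟨0, ?_⟩; rintro y ⟨n, rfl⟩; positivity
  have hbdd' : BddBelow (Set.range fun k : ℕ => dist (f^[k + 1] x) x / ((k : ℝ) + 1)) := by
    refine ⟨0, ?_⟩; rintro y ⟨k, rfl⟩; positivity
  have heq : stableLen f x = hsub.lim := by
    apply le_antisymm
    · rw [Subadditive.lim]
      apply le_csInf (Set.Nonempty.image _ ⟨1, by simp⟩)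
      rintro y ⟨m, hm, rfl⟩
      obtain ⟨k, rfl⟩ := Nat.exists_eq_add_of_le hm
      calc stableLen f x ≤ dist (f^[k + 1] x) x / ((k : ℝ) + 1) := ciInf_le hbdd' k
        _ = dist (f^[1 + k] x) x / ((1 + k : ℕ) : ℝ) := by rw [add_comm 1 k]; push_cast; ring_nf
    · apply le_ciInf; intro k
      calc hsub.lim ≤ dist (f^[k + 1] x) x / ((k + 1 : ℕ) : ℝ) :=
            hsub.lim_le_div hbdd (by omega)
        _ = dist (f^[k + 1] x) x / ((k : ℝ) + 1) := by push_cast; ring_nf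
  rw [heq]
  exact hsub.tendsto_lim hbdd

lemma aux_eq (δ : ℝ) (hδ : 0 ≤ δ)
    (hfpc : ∀ x y s t : X, dist x y + dist s t ≤
      max (dist x s + dist y t) (dist x t + dist y s) + 2 * δ)
    {f : X → X} (hf : Isometry f) (x : X) :
    stableLen f x =
      ⨆ n : ℕ, (dist (f^[2 * (n + 1)] x) x - dist (f^[n + 1] x) x - 2 * δ) / (n + 1) := by
  set L := stableLen f x with hL
  have hub : ∀ n : ℕ,
      (dist (f^[2 * (n + 1)] x) x - dist (f^[n + 1] x) x - 2 * δ) / ((n : ℝ) + 1) ≤ L :=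
    fun n => aux_Gle δ hδ hfpc hf x n
  have hbddA : BddAbove (Set.range fun n : ℕ =>
      (dist (f^[2 * (n + 1)] x) x - dist (f^[n + 1] x) x - 2 * δ) / ((n : ℝ) + 1)) := by
    refine ⟨L, ?_⟩; rintro y ⟨n, rfl⟩; exact hub n
  have hT := aux_tendsto hf x
  apply le_antisymm
  · -- L ≤ sup, since the terms tend to L
    have h1 : Tendsto (fun n : ℕ => dist (f^[n + 1] x) x / ((n : ℝ) + 1)) atTop (𝓝 L) := by
      have := hT.comp (tendsto_add_atTop_nat 1)
      refine this.congr fun n => ?_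
      simp only [comp_apply]
      push_cast; ring_nf
    have hmul : Tendsto (fun n : ℕ => 2 * (n + 1)) atTop atTop := by
      apply tendsto_atTop_atTop_of_monotone
      · intro a b h; dsimp only; omega
      · intro b; exact ⟨b, by omega⟩
    have h2 : Tendsto (fun n : ℕ => dist (f^[2 * (n + 1)] x) x / ((n : ℝ) + 1)) atTop
        (𝓝 (2 * L)) := by
      have := (hT.comp hmul).const_mul 2
      refine this.congr fun n => ?_
      have hc : ((n : ℝ) + 1) ≠ 0 := by positivity
      simp only [comp_apply]
      push_cast
      field_simp
    have h0 : Tendsto (fun n : ℕ => 2 * δ / ((n : ℝ) + 1)) atTop (𝓝 0) := by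
      have := (tendsto_const_div_atTop_nhds_zero_nat (2 * δ)).comp (tendsto_add_atTop_nat 1)
      refine this.congr fun n => ?_
      simp only [comp_apply]
      push_cast; ring_nf
    have hG : Tendsto (fun n : ℕ =>
        (dist (f^[2 * (n + 1)] x) x - dist (f^[n + 1] x) x - 2 * δ) / ((n : ℝ) + 1)) atTop
        (𝓝 L) := by
      have h := (h2.sub h1).sub h0
      rw [show 2 * L - L - 0 = L from by ring] at h
      refine h.congr fun n => ?_
      rw [div_sub_div_same, div_sub_div_same]
    exact le_of_tendsto hG (Filter.Eventually.of_forall fun n => le_ciSup hbddA n)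
  · exact ciSup_le hub

lemma aux_eval_cont :
    Continuous fun p : {f : X → X // Isometry f ∧ Function.Surjective f} × X => p.1.1 p.2 := by
  rw [continuous_iff_continuousAt]
  rintro ⟨f, y⟩
  rw [ContinuousAt, Metric.tendsto_nhds]
  intro ε hε
  have hc1 : Continuous fun p : {f : X → X // Isometry f ∧ Function.Surjective f} × X =>
      dist (p.1.1 y) (f.1 y) :=
    ((continuous_apply y).comp (continuous_subtype_val.comp continuous_fst)).dist
      continuous_const
  have h1 : ∀ᶠ p : {f : X → X // Isometry f ∧ Function.Surjective f} × X in 𝓝 (f, y),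
      dist (p.1.1 y) (f.1 y) < ε / 2 :=
    hc1.continuousAt.eventually_lt tendsto_const_nhds (by simpa using half_pos hε)
  have hc2 : Continuous fun p : {f : X → X // Isometry f ∧ Function.Surjective f} × X =>
      dist p.2 y := continuous_snd.dist continuous_const
  have h2 : ∀ᶠ p : {f : X → X // Isometry f ∧ Function.Surjective f} × X in 𝓝 (f, y),
      dist p.2 y < ε / 2 :=
    hc2.continuousAt.eventually_lt tendsto_const_nhds (by simpa using half_pos hε)
  filter_upwards [h1, h2] with p hp1 hp2
  calc dist (p.1.1 p.2) (f.1 y)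
      ≤ dist (p.1.1 p.2) (p.1.1 y) + dist (p.1.1 y) (f.1 y) := dist_triangle _ _ _
    _ = dist p.2 y + dist (p.1.1 y) (f.1 y) := by rw [p.1.2.1.dist_eq]
    _ < ε / 2 + ε / 2 := add_lt_add hp2 hp1
    _ = ε := add_halves ε

lemma aux_iter_cont (x : X) (n : ℕ) :
    Continuous fun f : {f : X → X // Isometry f ∧ Function.Surjective f} => f.1^[n] x := by
  induction n with
  | zero => simpa using continuous_const
  | succ n ih =>
    have he : (fun f : {f : X → X // Isometry f ∧ Function.Surjective f} => f.1^[n + 1] x)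
        = fun f => f.1 (f.1^[n] x) := by
      funext f; rw [Function.iterate_succ_apply']
    rw [he]
    exact aux_eval_cont.comp (continuous_id.prodMk ih)

end Aux

theorem stmt17 {X : Type*} [MetricSpace X] (δ : ℝ) (hδ : 0 ≤ δ)
    (hfpc : ∀ x y s t : X, dist x y + dist s t ≤
      max (dist x s + dist y t) (dist x t + dist y s) + 2 * δ)
    (x : X) :
    Continuous (fun f : {f : X → X // Isometry f ∧ Function.Surjective f} =>
      stableLen f.1 x) ∧
    (∀ f : X → X, Isometry f → Function.Surjective f →
      stableLen f x =
        ⨆ n : ℕ, (dist (f^[2 * (n + 1)] x) x - dist (f^[n + 1] x) x - 2 * δ) / (n + 1)) := by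
  constructor
  · rw [continuous_iff_continuousAt]
    intro f
    rw [ContinuousAt, Metric.tendsto_nhds]
    intro ε hε
    set L := stableLen f.1 x with hLdef
    obtain ⟨N, hN⟩ : ∃ N : ℕ, dist (f.1^[N + 1] x) x / ((N : ℝ) + 1) < L + ε := by
      apply exists_lt_of_ciInf_lt
      change stableLen f.1 x < L + ε
      rw [← hLdef]; linarith
    obtain ⟨M, hM⟩ : ∃ M : ℕ,
        L - ε < (dist (f.1^[2 * (M + 1)] x) x - dist (f.1^[M + 1] x) x - 2 * δ) / ((M : ℝ) + 1) := by
      apply exists_lt_of_lt_ciSup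
      rw [← aux_eq δ hδ hfpc f.2.1 x, ← hLdef]
      linarith
    have hFcont : Continuous fun g : {f : X → X // Isometry f ∧ Function.Surjective f} =>
        dist (g.1^[N + 1] x) x / ((N : ℝ) + 1) :=
      ((aux_iter_cont x (N + 1)).dist continuous_const).div_const _
    have hGcont : Continuous fun g : {f : X → X // Isometry f ∧ Function.Surjective f} =>
        (dist (g.1^[2 * (M + 1)] x) x - dist (g.1^[M + 1] x) x - 2 * δ) / ((M : ℝ) + 1) :=
      ((((aux_iter_cont x (2 * (M + 1))).dist continuous_const).sub
        ((aux_iter_cont x (M + 1)).dist continuous_const)).sub continuous_const).div_const _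
    have e1 : ∀ᶠ g in 𝓝 f, dist (g.1^[N + 1] x) x / ((N : ℝ) + 1) < L + ε :=
      hFcont.continuousAt.eventually_lt tendsto_const_nhds hN
    have e2 : ∀ᶠ g in 𝓝 f,
        L - ε < (dist (g.1^[2 * (M + 1)] x) x - dist (g.1^[M + 1] x) x - 2 * δ) / ((M : ℝ) + 1) :=
      tendsto_const_nhds.eventually_lt hGcont.continuousAt hM
    filter_upwards [e1, e2] with g hg1 hg2
    rw [Real.dist_eq, abs_sub_lt_iff]
    constructor
    · have h := ciInf_le (f := fun n : ℕ => dist (g.1^[n + 1] x) x / ((n : ℝ) + 1))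
        ⟨0, by rintro y ⟨k, rfl⟩; positivity⟩ N
      have h' : stableLen g.1 x ≤ dist (g.1^[N + 1] x) x / ((N : ℝ) + 1) := h
      linarith
    · have h := aux_Gle δ hδ hfpc g.2.1 x M
      linarith
  · intro f hf _
    exact aux_eq δ hδ hfpc hf x
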